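/- Let z be a class of admissible type, with associated derivation ∂_z. Then every f₀ ∈ ℚ[H₀] has a unique extension f ∈ f₀ + Λ_{≥1} satisfying ∂_z f = 0. Moreover this extension operation preserves degrees: if f₀ is homogeneous of degree i (f₀ ∈ Λ^i), then so is f. -/

import Mathlib

namespace Nov

/-- The lattice `H = ℤ^{r+2}`. -/
abbrev H (r : ℕ) : Type := Fin (r + 2) → ℤ

/-- The delta function `q^{A₀}` at `A₀ ∈ H`. -/
noncomputable def delta {r : ℕ} (A₀ : H r) : H r → ℚ :=
  fun A => if A = A₀ then 1 else 0

/-- The unit element `q^0` of the Novikov ring. -/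
noncomputable def one (r : ℕ) : H r → ℚ := delta (0 : H r)

/-- The convolution product `(x·y)(A) = ∑_{A₁+A₂=A} x(A₁)·y(A₂)`. -/
noncomputable def mul {r : ℕ} (x y : H r → ℚ) : H r → ℚ :=
  fun A => ∑ᶠ B : H r, x B * y (A - B)

/-- The degree-2 derivation `(∂_z x)(A) = ∑_{A₁+A₂=A} z_{A₁}(A₂)·x(A₂)`
associated to a family `z` of additive maps `H → ℚ`. -/
noncomputable def dz {r : ℕ} (z : H r → (H r →+ ℚ)) (x : H r → ℚ) : H r → ℚ :=
  fun A => ∑ᶠ B : H r, z (A - B) B * x B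

/-- The `ν`-finiteness condition: for every `C`, only finitely many support
elements `A` with `ν(A) ≤ C`. -/
def NuFinite {r : ℕ} (ν : H r →+ ℤ) (x : H r → ℚ) : Prop :=
  ∀ C : ℤ, {A : H r | x A ≠ 0 ∧ ν A ≤ C}.Finite

/-- Membership in the homogeneous piece `Λ^i`: support in `{2μ = i}` plus
`ν`-finiteness. -/
def MemHom {r : ℕ} (μ ν : H r →+ ℤ) (i : ℤ) (x : H r → ℚ) : Prop :=
  (∀ A, x A ≠ 0 → 2 * μ A = i) ∧ NuFinite ν x

/-- Membership in `Λ = ⊕_i Λ^i`: `ν`-finiteness plus finitely many occurring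
degrees. -/
def MemLambda {r : ℕ} (μ ν : H r →+ ℤ) (x : H r → ℚ) : Prop :=
  NuFinite ν x ∧ ({i : ℤ | ∃ A, x A ≠ 0 ∧ 2 * μ A = i}).Finite

/-- Support contained in `{ν ≥ k}` (membership in `Λ_{≥k}`, for elements of
`Λ`). -/
def MemGE {r : ℕ} (ν : H r →+ ℤ) (k : ℤ) (x : H r → ℚ) : Prop :=
  ∀ A, x A ≠ 0 → k ≤ ν A

/-- A class `z` of admissible type: supported on `{μ = 1}`, `ν`-finite, equal
to `ν` at `A_*`, and vanishing on all `A₁ ≠ A_*` with `ν(A₁) < 0`. -/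
structure Admissible {r : ℕ} (μ ν : H r →+ ℤ) (Astar : H r)
    (z : H r → (H r →+ ℚ)) : Prop where
  supp_mu : ∀ A₁, z A₁ ≠ 0 → μ A₁ = 1
  nu_fin : ∀ C : ℤ, {A₁ : H r | z A₁ ≠ 0 ∧ ν A₁ ≤ C}.Finite
  at_star : ∀ A, z Astar A = (ν A : ℚ)
  vanish_neg : ∀ A₁, A₁ ≠ Astar → ν A₁ < 0 → z A₁ = 0

open scoped Classical in
/-- The (two-sided) inverse of `x` within `Λ`, chosen if it exists. -/
noncomputable def invN {r : ℕ} (μ ν : H r →+ ℤ) (x : H r → ℚ) : H r → ℚ :=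
  if h : ∃ y, MemLambda μ ν y ∧ mul x y = one r ∧ mul y x = one r then
    h.choose
  else 0

/-- The Schwarzian
`S_z f = ∂_z(∂_z∂_z f·(∂_z f)⁻¹) − (1/2)·(∂_z∂_z f·(∂_z f)⁻¹)²`. -/
noncomputable def Sz {r : ℕ} (μ ν : H r →+ ℤ) (z : H r → (H r →+ ℚ))
    (f : H r → ℚ) : H r → ℚ :=
  dz z (mul (dz z (dz z f)) (invN μ ν (dz z f)))
    - (1 / 2 : ℚ) •
        mul (mul (dz z (dz z f)) (invN μ ν (dz z f)))
          (mul (dz z (dz z f)) (invN μ ν (dz z f)))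

end Nov

namespace NovAux
open Nov

variable {r : ℕ} {μ ν : H r →+ ℤ} {Astar : H r} {z : H r → (H r →+ ℚ)}

/-- The finite set of `A₁ ≠ A_*` with `z A₁ ≠ 0` and `ν A₁ ≤ k`. -/
noncomputable def T (hz : Admissible μ ν Astar z) (k : ℤ) : Finset (H r) :=
  ((hz.nu_fin k).toFinset).erase Astar

lemma mem_T {hz : Admissible μ ν Astar z} {k : ℤ} {A₁ : H r} :
    A₁ ∈ T hz k ↔ A₁ ≠ Astar ∧ z A₁ ≠ 0 ∧ ν A₁ ≤ k := by
  simp [T, Finset.mem_erase, Set.Finite.mem_toFinset, Set.mem_setOf_eq]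

lemma nu_nonneg_of_mem_T {hz : Admissible μ ν Astar z} {k : ℤ} {A₁ : H r}
    (h : A₁ ∈ T hz k) : 0 ≤ ν A₁ := by
  rcases mem_T.mp h with ⟨hne, hz0, -⟩
  by_contra hlt
  exact hz0 (hz.vanish_neg _ hne (by omega))

lemma nu_arg (hνA : ν Astar = -1) (A A₁ : H r) :
    ν (A + Astar - A₁) = ν A - 1 - ν A₁ := by
  simp [map_sub, map_add, hνA]; ring

/-- The canonical extension, defined by recursion on `ν`. -/
noncomputable def extn (hz : Admissible μ ν Astar z) (hνA : ν Astar = -1)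
    (f₀ : H r → ℚ) (A : H r) : ℚ :=
  if h : 1 ≤ ν A then
    -(1 / (ν A : ℚ)) * ∑ p ∈ (T hz (ν A - 1)).attach,
      z p.1 (A + Astar - p.1) * extn hz hνA f₀ (A + Astar - p.1)
  else f₀ A
termination_by (ν A).toNat
decreasing_by
  have h1 := nu_nonneg_of_mem_T p.2
  have h2 := (mem_T.mp p.2).2.2
  have h3 := nu_arg hνA A p.1
  omega

lemma extn_eq (hz : Admissible μ ν Astar z) (hνA : ν Astar = -1)
    (f₀ : H r → ℚ) (A : H r) :
    extn hz hνA f₀ A =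
      if 1 ≤ ν A then
        -(1 / (ν A : ℚ)) * ∑ A₁ ∈ T hz (ν A - 1),
          z A₁ (A + Astar - A₁) * extn hz hνA f₀ (A + Astar - A₁)
      else f₀ A := by
  rw [extn]
  by_cases h : 1 ≤ ν A
  · rw [dif_pos h, if_pos h,
      Finset.sum_attach (T hz (ν A - 1))
        (fun A₁ => z A₁ (A + Astar - A₁) * extn hz hνA f₀ (A + Astar - A₁))]
  · rw [dif_neg h, if_neg h]

lemma extn_of_nonpos (hz : Admissible μ ν Astar z) (hνA : ν Astar = -1)
    (f₀ : H r → ℚ) {A : H r} (h : ν A ≤ 0) : extn hz hνA f₀ A = f₀ A := by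
  rw [extn_eq, if_neg (by omega)]

lemma T_empty (hz : Admissible μ ν Astar z) {k : ℤ} (hk : k < 0) :
    T hz k = ∅ := by
  apply Finset.eq_empty_of_forall_notMem
  intro A₁ h
  have := nu_nonneg_of_mem_T h
  have := (mem_T.mp h).2.2
  omega

/-- The recursion identity, valid for all `A`. -/
lemma extn_rec (hz : Admissible μ ν Astar z) (hνA : ν Astar = -1)
    (f₀ : H r → ℚ) (hker : ∀ A, f₀ A ≠ 0 → ν A = 0) (A : H r) :
    (ν A : ℚ) * extn hz hνA f₀ A =
      -∑ A₁ ∈ T hz (ν A - 1),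
        z A₁ (A + Astar - A₁) * extn hz hνA f₀ (A + Astar - A₁) := by
  by_cases h : 1 ≤ ν A
  · rw [extn_eq, if_pos h]
    have hν : (ν A : ℚ) ≠ 0 := by
      exact_mod_cast (by omega : ν A ≠ 0)
    field_simp
  · rw [T_empty hz (by omega), Finset.sum_empty, neg_zero]
    rcases lt_or_eq_of_le (by omega : ν A ≤ 0) with h' | h'
    · rw [extn_of_nonpos hz hνA f₀ (le_of_lt h')]
      rcases eq_or_ne (f₀ A) 0 with h0 | h0
      · rw [h0, mul_zero]
      · exact absurd (hker A h0) (by omega)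
    · simp [h']

/-- Support control for the extension. -/
lemma extn_supp (hz : Admissible μ ν Astar z) (hμA : μ Astar = 1)
    (hνA : ν Astar = -1) (f₀ : H r → ℚ) (hker : ∀ A, f₀ A ≠ 0 → ν A = 0) :
    ∀ A, extn hz hνA f₀ A ≠ 0 → 0 ≤ ν A ∧ ∃ B, f₀ B ≠ 0 ∧ μ A = μ B := by
  suffices H : ∀ n : ℕ, ∀ A : H r, (ν A).toNat ≤ n → extn hz hνA f₀ A ≠ 0 →
      0 ≤ ν A ∧ ∃ B, f₀ B ≠ 0 ∧ μ A = μ B from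
    fun A => H (ν A).toNat A le_rfl
  have base : ∀ A : H r, ν A ≤ 0 → extn hz hνA f₀ A ≠ 0 →
      0 ≤ ν A ∧ ∃ B, f₀ B ≠ 0 ∧ μ A = μ B := by
    intro A hA hne
    rw [extn_of_nonpos hz hνA f₀ hA] at hne
    exact ⟨(hker A hne).ge, A, hne, rfl⟩
  intro n
  induction n with
  | zero => intro A hA hne; exact base A (by omega) hne
  | succ n ih =>
    intro A hA hne
    by_cases h : 1 ≤ ν A
    · rw [extn_eq, if_pos h] at hne
      have hs : ∑ A₁ ∈ T hz (ν A - 1),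
          z A₁ (A + Astar - A₁) * extn hz hνA f₀ (A + Astar - A₁) ≠ 0 := by
        intro h0; rw [h0, mul_zero] at hne; exact hne rfl
      obtain ⟨A₁, hA₁, hterm⟩ := Finset.exists_ne_zero_of_sum_ne_zero hs
      have hz1 : z A₁ (A + Astar - A₁) ≠ 0 := fun h0 => hterm (by rw [h0, zero_mul])
      have he : extn hz hνA f₀ (A + Astar - A₁) ≠ 0 :=
        fun h0 => hterm (by rw [h0, mul_zero])
      have h1 := nu_nonneg_of_mem_T hA₁
      have h2 := (mem_T.mp hA₁).2.2
      have h3 := nu_arg hνA A A₁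
      obtain ⟨-, B, hB, hμB⟩ := ih (A + Astar - A₁) (by omega) he
      refine ⟨by omega, B, hB, ?_⟩
      have hμ1 : μ A₁ = 1 :=
        hz.supp_mu A₁ (fun h0 => hz1 (by rw [h0]; rfl))
      have : μ (A + Astar - A₁) = μ A + μ Astar - μ A₁ := by
        simp [map_sub, map_add]
      rw [← hμB, this, hμA, hμ1]; ring
    · exact base A (by omega) hne

/-- `ν`-finiteness of the extension. -/
lemma extn_nufin (hz : Admissible μ ν Astar z) (hνA : ν Astar = -1)
    (f₀ : H r → ℚ) (hfin : (Function.support f₀).Finite) :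
    NuFinite ν (extn hz hνA f₀) := by
  suffices H : ∀ n : ℕ, {A : H r | extn hz hνA f₀ A ≠ 0 ∧ ν A ≤ (n : ℤ)}.Finite by
    intro C
    refine (H C.toNat).subset ?_
    intro A ⟨h1, h2⟩
    exact ⟨h1, by omega⟩
  intro n
  induction n with
  | zero =>
    refine hfin.subset ?_
    intro A ⟨h1, h2⟩
    rwa [extn_of_nonpos hz hνA f₀ (by exact_mod_cast h2)] at h1
  | succ n ih =>
    have hsub : {A : H r | extn hz hνA f₀ A ≠ 0 ∧ ν A ≤ ((n + 1 : ℕ) : ℤ)} ⊆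
        {A : H r | extn hz hνA f₀ A ≠ 0 ∧ ν A ≤ (n : ℤ)} ∪
          (fun p : H r × H r => p.2 + p.1 - Astar) ''
            ((T hz n : Set (H r)) ×ˢ
              {A : H r | extn hz hνA f₀ A ≠ 0 ∧ ν A ≤ (n : ℤ)}) := by
      intro A ⟨h1, h2⟩
      by_cases hle : ν A ≤ (n : ℤ)
      · exact Or.inl ⟨h1, hle⟩
      · right
        have hν : ν A = (n : ℤ) + 1 := by push_cast at h2 ⊢; omega
        rw [extn_eq, if_pos (by omega)] at h1
        have hs : ∑ A₁ ∈ T hz (ν A - 1),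
            z A₁ (A + Astar - A₁) * extn hz hνA f₀ (A + Astar - A₁) ≠ 0 := by
          intro h0; rw [h0, mul_zero] at h1; exact h1 rfl
        obtain ⟨A₁, hA₁, hterm⟩ := Finset.exists_ne_zero_of_sum_ne_zero hs
        have he : extn hz hνA f₀ (A + Astar - A₁) ≠ 0 :=
          fun h0 => hterm (by rw [h0, mul_zero])
        have h1' := nu_nonneg_of_mem_T hA₁
        have h2' := (mem_T.mp hA₁).2.2
        have h3 := nu_arg hνA A A₁
        have hA₁' : A₁ ∈ T hz (n : ℤ) := by rwa [hν, add_sub_cancel_right] at hA₁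
        refine ⟨(A₁, A + Astar - A₁),
          Set.mem_prod.mpr ⟨by simpa using hA₁',
            ⟨he, by show ν (A + Astar - A₁) ≤ (n : ℤ); omega⟩⟩, ?_⟩
        show A + Astar - A₁ + A₁ - Astar = A
        abel
    exact (ih.union (((T hz n).finite_toSet.prod ih).image _)).subset hsub

/-- Pointwise formula for `∂_z` on suitably supported `x`. -/
lemma dz_apply (hz : Admissible μ ν Astar z) (hνA : ν Astar = -1)
    (x : H r → ℚ) (hx : NuFinite ν x) (hx0 : ∀ A, x A ≠ 0 → 0 ≤ ν A)
    (A : H r) :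
    dz z x A = (ν (A - Astar) : ℚ) * x (A - Astar) +
      ∑ A₁ ∈ T hz (ν A), z A₁ (A - A₁) * x (A - A₁) := by
  classical
  set s : Finset (H r) := (hx (ν A + 1)).toFinset with hs_def
  have hmem_s : ∀ B : H r, B ∈ s ↔ x B ≠ 0 ∧ ν B ≤ ν A + 1 := by
    intro B; simp [hs_def, Set.Finite.mem_toFinset]
  set s' : Finset (H r) :=
    insert (A - Astar) ((T hz (ν A)).image (fun A₁ => A - A₁)) with hs'_def
  have key : ∀ B : H r, B ∉ s ∨ B ∉ s' → z (A - B) B * x B = 0 := by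
    intro B hB
    rcases eq_or_ne (x B) 0 with h0 | h0
    · rw [h0, mul_zero]
    rcases eq_or_ne (z (A - B)) 0 with hz0 | hz0
    · rw [hz0]; simp
    have hνB0 : 0 ≤ ν B := hx0 B h0
    have hνAB : A - B = Astar ∨ 0 ≤ ν (A - B) := by
      rcases eq_or_ne (A - B) Astar with h | h
      · exact Or.inl h
      · exact Or.inr (le_of_not_gt fun hlt => hz0 (hz.vanish_neg _ h hlt))
    exfalso
    rcases hB with hB | hB
    · rw [hmem_s] at hB
      push_neg at hB
      have := hB h0
      rcases hνAB with h | h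
      · have : ν (A - B) = -1 := by rw [h, hνA]
        simp only [map_sub] at this
        omega
      · simp only [map_sub] at h; omega
    · rw [hs'_def] at hB
      simp only [Finset.mem_insert, Finset.mem_image, not_or, not_exists] at hB
      obtain ⟨hB1, hB2⟩ := hB
      rcases hνAB with h | h
      · exact hB1 (by rw [← h]; abel)
      · have hAB : A - B ≠ Astar := by
          intro hc
          exact hB1 (by rw [← hc]; abel)
        have hT : A - B ∈ T hz (ν A) := by
          rw [mem_T]
          refine ⟨hAB, hz0, ?_⟩
          simp only [map_sub]; omega
        exact hB2 (A - B) ⟨hT, sub_sub_cancel A B⟩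
  have hsupp : Function.support (fun B => z (A - B) B * x B) ⊆ ↑s := by
    intro B hB
    simp only [Function.mem_support] at hB
    by_contra hns
    exact hB (key B (Or.inl hns))
  have e1 : dz z x A = ∑ B ∈ s, z (A - B) B * x B :=
    finsum_eq_sum_of_support_subset _ hsupp
  have e2 : ∑ B ∈ s, z (A - B) B * x B = ∑ B ∈ s ∪ s', z (A - B) B * x B := by
    refine Finset.sum_subset Finset.subset_union_left ?_
    intro B _ hB; exact key B (Or.inl hB)
  have e3 : ∑ B ∈ s ∪ s', z (A - B) B * x B = ∑ B ∈ s', z (A - B) B * x B := by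
    refine (Finset.sum_subset Finset.subset_union_right ?_).symm
    intro B _ hB; exact key B (Or.inr hB)
  have hnotmem : A - Astar ∉ (T hz (ν A)).image (fun A₁ => A - A₁) := by
    simp only [Finset.mem_image]
    rintro ⟨A₁, hA₁, heq⟩
    exact (mem_T.mp hA₁).1 (sub_right_injective heq)
  have e4 : ∑ B ∈ s', z (A - B) B * x B =
      z (A - (A - Astar)) (A - Astar) * x (A - Astar) +
        ∑ B ∈ (T hz (ν A)).image (fun A₁ => A - A₁), z (A - B) B * x B := by
    rw [hs'_def, Finset.sum_insert hnotmem]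
  have e5 : ∑ B ∈ (T hz (ν A)).image (fun A₁ => A - A₁), z (A - B) B * x B =
      ∑ A₁ ∈ T hz (ν A), z A₁ (A - A₁) * x (A - A₁) := by
    rw [Finset.sum_image (fun x _ y _ h => sub_right_injective h)]
    refine Finset.sum_congr rfl fun A₁ _ => ?_
    rw [sub_sub_cancel]
  rw [e1, e2, e3, e4, e5, sub_sub_cancel, hz.at_star]

/-- Characterization of `∂_z x = 0` by the `ν`-recursion. -/
lemma dz_zero_iff (hz : Admissible μ ν Astar z) (hνA : ν Astar = -1)
    (x : H r → ℚ) (hx : NuFinite ν x) (hx0 : ∀ A, x A ≠ 0 → 0 ≤ ν A) :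
    dz z x = 0 ↔ ∀ A : H r, (ν A : ℚ) * x A =
      -∑ A₁ ∈ T hz (ν A - 1), z A₁ (A + Astar - A₁) * x (A + Astar - A₁) := by
  have hsub : ∀ A : H r, ν (A + Astar) = ν A - 1 := by
    intro A; rw [map_add, hνA]; ring
  have hsub' : ∀ A : H r, ν (A - Astar) = ν A + 1 := by
    intro A; rw [map_sub, hνA]; ring
  constructor
  · intro h A
    have h0 := congrFun h (A + Astar)
    rw [dz_apply hz hνA x hx hx0 (A + Astar), Pi.zero_apply] at h0
    rw [add_sub_cancel_right, hsub] at h0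
    linarith [h0]
  · intro h
    funext A
    rw [Pi.zero_apply, dz_apply hz hνA x hx hx0 A]
    have h0 := h (A - Astar)
    rw [hsub'] at h0
    have heq : ∀ A₁ : H r, A - Astar + Astar - A₁ = A - A₁ := by
      intro A₁; abel
    simp only [heq, add_sub_cancel_right] at h0
    rw [hsub', h0]
    ring

/-- Uniqueness: any solution of the recursion agreeing with `f₀` on `ν ≤ 0`
equals the canonical extension. -/
lemma eq_extn (hz : Admissible μ ν Astar z) (hνA : ν Astar = -1)
    (f₀ : H r → ℚ) (hker : ∀ A, f₀ A ≠ 0 → ν A = 0)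
    (x : H r → ℚ) (hx : NuFinite ν x) (hx0 : ∀ A, x A ≠ 0 → 0 ≤ ν A)
    (hxlow : ∀ A, ν A ≤ 0 → x A = f₀ A) (hdz : dz z x = 0) :
    x = extn hz hνA f₀ := by
  have hrec := (dz_zero_iff hz hνA x hx hx0).mp hdz
  funext A
  suffices H : ∀ n : ℕ, ∀ A : H r, (ν A).toNat ≤ n → x A = extn hz hνA f₀ A from
    H (ν A).toNat A le_rfl
  intro n
  induction n with
  | zero =>
    intro A hA
    rw [hxlow A (by omega), extn_of_nonpos hz hνA f₀ (by omega)]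
  | succ n ih =>
    intro A hA
    by_cases h : 1 ≤ ν A
    · have h1 := hrec A
      have h2 := extn_rec hz hνA f₀ hker A
      have h3 : ∑ A₁ ∈ T hz (ν A - 1), z A₁ (A + Astar - A₁) * x (A + Astar - A₁)
          = ∑ A₁ ∈ T hz (ν A - 1),
              z A₁ (A + Astar - A₁) * extn hz hνA f₀ (A + Astar - A₁) := by
        refine Finset.sum_congr rfl fun A₁ hA₁ => ?_
        have ha := nu_nonneg_of_mem_T hA₁
        have hb := (mem_T.mp hA₁).2.2
        have hc := nu_arg hνA A A₁
        rw [ih (A + Astar - A₁) (by omega)]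
      have hν : (ν A : ℚ) ≠ 0 := by exact_mod_cast (by omega : ν A ≠ 0)
      have : (ν A : ℚ) * x A = (ν A : ℚ) * extn hz hνA f₀ A := by
        rw [h1, h2, h3]
      exact mul_left_cancel₀ hν this
    · rw [hxlow A (by omega), extn_of_nonpos hz hνA f₀ (by omega)]

end NovAux

open NovAux in
open Nov in
/-- Any `f₀ ∈ ℚ[H₀]` has a unique extension `f ∈ f₀ + Λ_{≥1}` with
`∂_z f = 0`; moreover the extension preserves degrees: if `f₀` is homogeneous
of degree `i` then so is the extension. -/
theorem unique_dz_constant_extension (r : ℕ) (μ ν : H r →+ ℤ) (Astar : H r)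
    (hμA : μ Astar = 1) (hνA : ν Astar = -1)
    (z : H r → (H r →+ ℚ)) (hz : Admissible μ ν Astar z)
    (f₀ : H r → ℚ) (hfin : (Function.support f₀).Finite)
    (hker : ∀ A, f₀ A ≠ 0 → ν A = 0) :
    (∃! g : H r → ℚ,
        MemLambda μ ν g ∧ MemGE ν 1 g ∧ dz z (f₀ + g) = 0) ∧
    (∀ i : ℤ, (∀ A, f₀ A ≠ 0 → 2 * μ A = i) →
        ∀ g : H r → ℚ, MemLambda μ ν g → MemGE ν 1 g → dz z (f₀ + g) = 0 →
          MemHom μ ν i (f₀ + g)) := by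
  classical
  set f : H r → ℚ := extn hz hνA f₀ with hf
  have hsuppf : ∀ A, f A ≠ 0 → 0 ≤ ν A ∧ ∃ B, f₀ B ≠ 0 ∧ μ A = μ B :=
    extn_supp hz hμA hνA f₀ hker
  have hnufinf : NuFinite ν f := extn_nufin hz hνA f₀ hfin
  have hdzf : dz z f = 0 :=
    (dz_zero_iff hz hνA f hnufinf (fun A h => (hsuppf A h).1)).mpr
      (extn_rec hz hνA f₀ hker)
  set g : H r → ℚ := fun A => if 1 ≤ ν A then f A else 0 with hg
  have hgf : ∀ A, g A ≠ 0 → f A = g A ∧ 1 ≤ ν A := by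
    intro A hA
    by_cases h : 1 ≤ ν A
    · constructor
      · simp [hg, h]
      · exact h
    · exact absurd (by simp [hg, h]) hA
  have hfg : f₀ + g = f := by
    funext A
    by_cases h : 1 ≤ ν A
    · have hf0 : f₀ A = 0 := by
        by_contra h0
        have := hker A h0
        omega
      simp [Pi.add_apply, hg, h, hf0]
    · have : f A = f₀ A := extn_of_nonpos hz hνA f₀ (by omega)
      simp [Pi.add_apply, hg, h, this]
  have hgmem : MemLambda μ ν g := by
    constructor
    · intro C
      refine (hnufinf C).subset ?_
      rintro A ⟨h1, h2⟩
      exact ⟨by rw [(hgf A h1).1]; exact h1, h2⟩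
    · refine (hfin.image (fun B => 2 * μ B)).subset ?_
      rintro i ⟨A, hA, rfl⟩
      have hfA : f A ≠ 0 := by rw [(hgf A hA).1]; exact hA
      obtain ⟨-, B, hB, hμB⟩ := hsuppf A hfA
      exact ⟨B, hB, by rw [hμB]⟩
  have hgge : MemGE ν 1 g := fun A hA => (hgf A hA).2
  have huniq : ∀ g' : H r → ℚ, MemLambda μ ν g' → MemGE ν 1 g' →
      dz z (f₀ + g') = 0 → f₀ + g' = f := by
    intro g' hmem hge hdz'
    refine eq_extn hz hνA f₀ hker (f₀ + g') ?_ ?_ ?_ hdz'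
    · intro C
      refine (hfin.union (hmem.1 C)).subset ?_
      rintro A ⟨h1, h2⟩
      rcases eq_or_ne (f₀ A) 0 with h0 | h0
      · refine Or.inr ⟨?_, h2⟩
        intro hg0
        exact h1 (by simp [Pi.add_apply, h0, hg0])
      · exact Or.inl h0
    · intro A hA
      rcases eq_or_ne (f₀ A) 0 with h0 | h0
      · have hg0 : g' A ≠ 0 := by
          intro hg0
          exact hA (by simp [Pi.add_apply, h0, hg0])
        have := hge A hg0
        omega
      · have := hker A h0
        omega
    · intro A hA
      have hg0 : g' A = 0 := by
        by_contra h0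
        have := hge A h0
        omega
      simp [Pi.add_apply, hg0]
  constructor
  · refine ⟨g, ⟨hgmem, hgge, by rw [hfg]; exact hdzf⟩, ?_⟩
    intro g' ⟨hm, h1, hd⟩
    have heq : f₀ + g' = f₀ + g := (huniq g' hm h1 hd).trans hfg.symm
    funext A
    have := congrFun heq A
    simp only [Pi.add_apply] at this
    linarith
  · intro i hi g' hm h1 hd
    rw [huniq g' hm h1 hd]
    refine ⟨?_, hnufinf⟩
    intro A hA
    obtain ⟨-, B, hB, hμB⟩ := hsuppf A hA
    rw [hμB]
    exact hi B hB
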